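/- Let ρ > 0, ϑ > 0, λ⁺ > 0 and λ⁻ > 0, and define the two-point log-utility objective φ(h) = (1−h)ρ + λ⁺ log(1+hϑ) + λ⁻ log(1−hϑ) for h ∈ (−1/ϑ, 1/ϑ). Then φ is strictly concave on (−1/ϑ, 1/ϑ), and h* = (λ⁺+λ⁻)/(2ρ) − sqrt( ((λ⁺+λ⁻)/(2ρ) + 1/ϑ)² − 2λ⁺/(ϑρ) ) is its unique global maximizer on (−1/ϑ, 1/ϑ): φ(h) < φ(h*) for all h ∈ (−1/ϑ, 1/ϑ) with h ≠ h*. -/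

import Mathlib

set_option maxHeartbeats 1000000 in
/-- The two-point log-utility objective
`φ(h) = (1−h)ρ + λ⁺ log(1+hϑ) + λ⁻ log(1−hϑ)` is strictly concave on `(−1/ϑ, 1/ϑ)`, and
`h* = (λ⁺+λ⁻)/(2ρ) − sqrt(((λ⁺+λ⁻)/(2ρ) + 1/ϑ)² − 2λ⁺/(ϑρ))` is its unique global
maximizer on `(−1/ϑ, 1/ϑ)`. -/
theorem two_point_log_objective_strictly_concave_unique_max
    (ρ ϑ lp lm : ℝ) (hρ : 0 < ρ) (hϑ : 0 < ϑ) (hlp : 0 < lp) (hlm : 0 < lm)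
    (hstar : ℝ)
    (hdef : hstar = (lp + lm) / (2 * ρ) -
      Real.sqrt (((lp + lm) / (2 * ρ) + 1 / ϑ) ^ 2 - 2 * lp / (ϑ * ρ))) :
    StrictConcaveOn ℝ (Set.Ioo (-(1 / ϑ)) (1 / ϑ))
      (fun h => (1 - h) * ρ + lp * Real.log (1 + h * ϑ) + lm * Real.log (1 - h * ϑ)) ∧
    ∀ h ∈ Set.Ioo (-(1 / ϑ)) (1 / ϑ), h ≠ hstar →
      (1 - h) * ρ + lp * Real.log (1 + h * ϑ) + lm * Real.log (1 - h * ϑ) <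
      (1 - hstar) * ρ + lp * Real.log (1 + hstar * ϑ) + lm * Real.log (1 - hstar * ϑ) := by
  have hϑ0 : ϑ ≠ 0 := hϑ.ne'
  have hρ0 : ρ ≠ 0 := hρ.ne'
  set a : ℝ := -(1 / ϑ) with ha
  set b : ℝ := (1 : ℝ) / ϑ with hb
  set f : ℝ → ℝ := fun h => (1 - h) * ρ + lp * Real.log (1 + h * ϑ) + lm * Real.log (1 - h * ϑ)
    with hf
  set g : ℝ → ℝ := fun h => -ρ + lp * (ϑ / (1 + h * ϑ)) - lm * (ϑ / (1 - h * ϑ)) with hg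
  -- positivity of the denominators on the interval
  have hp1 : ∀ x ∈ Set.Ioo a b, 0 < 1 + x * ϑ := by
    rintro x ⟨h1, h2⟩
    have : -(1 / ϑ) * ϑ < x * ϑ := by exact mul_lt_mul_of_pos_right h1 hϑ
    rw [neg_mul, one_div, inv_mul_cancel₀ hϑ0] at this
    linarith
  have hp2 : ∀ x ∈ Set.Ioo a b, 0 < 1 - x * ϑ := by
    rintro x ⟨h1, h2⟩
    have : x * ϑ < (1 / ϑ) * ϑ := by exact mul_lt_mul_of_pos_right h2 hϑ
    rw [one_div, inv_mul_cancel₀ hϑ0] at this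
    linarith
  -- derivative of f is g on the interval
  have hderiv : ∀ x ∈ Set.Ioo a b, HasDerivAt f (g x) x := by
    intro x hx
    have h1 := (hp1 x hx).ne'
    have h2 := (hp2 x hx).ne'
    have d1 : HasDerivAt (fun h : ℝ => 1 + h * ϑ) ϑ x := by
      simpa using ((hasDerivAt_id x).mul_const ϑ).const_add 1
    have d2 : HasDerivAt (fun h : ℝ => 1 - h * ϑ) (-ϑ) x := by
      simpa using ((hasDerivAt_id x).mul_const ϑ).const_sub 1
    have dl1 : HasDerivAt (fun h : ℝ => Real.log (1 + h * ϑ)) (ϑ / (1 + x * ϑ)) x := d1.log h1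
    have dl2 : HasDerivAt (fun h : ℝ => Real.log (1 - h * ϑ)) (-ϑ / (1 - x * ϑ)) x := d2.log h2
    have dlin : HasDerivAt (fun h : ℝ => (1 - h) * ρ) (-ρ) x := by
      simpa using (((hasDerivAt_id x).const_sub 1).mul_const ρ)
    have := (dlin.add (dl1.const_mul lp)).add (dl2.const_mul lm)
    convert this using 1
    · rfl
    · rfl
    · rfl
    simp only [hg]
    field_simp
    ring
  have hcont : ContinuousOn f (Set.Ioo a b) :=
    fun x hx => (hderiv x hx).continuousAt.continuousWithinAt
  have hopen : IsOpen (Set.Ioo a b) := isOpen_Ioo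
  -- strict concavity
  have hconc : StrictConcaveOn ℝ (Set.Ioo a b) f := by
    apply strictConcaveOn_of_deriv2_neg (convex_Ioo a b) hcont
    intro x hx
    rw [interior_Ioo] at hx
    have h1 := hp1 x hx
    have h2 := hp2 x hx
    have heq : deriv f =ᶠ[nhds x] g :=
      Filter.eventuallyEq_of_mem (hopen.mem_nhds hx) (fun y hy => (hderiv y hy).deriv)
    have d1 : HasDerivAt (fun h : ℝ => 1 + h * ϑ) ϑ x := by
      simpa using ((hasDerivAt_id x).mul_const ϑ).const_add 1
    have d2 : HasDerivAt (fun h : ℝ => 1 - h * ϑ) (-ϑ) x := by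
      simpa using ((hasDerivAt_id x).mul_const ϑ).const_sub 1
    have dq1 : HasDerivAt (fun h : ℝ => ϑ / (1 + h * ϑ))
        ((0 * (1 + x * ϑ) - ϑ * ϑ) / (1 + x * ϑ) ^ 2) x :=
      (hasDerivAt_const x ϑ).div d1 h1.ne'
    have dq2 : HasDerivAt (fun h : ℝ => ϑ / (1 - h * ϑ))
        ((0 * (1 - x * ϑ) - ϑ * (-ϑ)) / (1 - x * ϑ) ^ 2) x :=
      (hasDerivAt_const x ϑ).div d2 h2.ne'
    have dg : HasDerivAt g
        (lp * ((0 * (1 + x * ϑ) - ϑ * ϑ) / (1 + x * ϑ) ^ 2)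
          - lm * ((0 * (1 - x * ϑ) - ϑ * (-ϑ)) / (1 - x * ϑ) ^ 2)) x := by
      simpa [hg, neg_add_eq_sub, Pi.sub_def] using (((dq1.const_mul lp).const_add (-ρ)).sub (dq2.const_mul lm))
    have : deriv^[2] f x = deriv (deriv f) x := rfl
    rw [this, heq.deriv_eq, dg.deriv]
    have t1 : 0 < lp * (ϑ * ϑ) / (1 + x * ϑ) ^ 2 := by positivity
    have t2 : 0 < lm * (ϑ * ϑ) / (1 - x * ϑ) ^ 2 := by positivity
    have e1 : lp * ((0 * (1 + x * ϑ) - ϑ * ϑ) / (1 + x * ϑ) ^ 2)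
        = -(lp * (ϑ * ϑ) / (1 + x * ϑ) ^ 2) := by ring
    have e2 : lm * ((0 * (1 - x * ϑ) - ϑ * (-ϑ)) / (1 - x * ϑ) ^ 2)
        = lm * (ϑ * ϑ) / (1 - x * ϑ) ^ 2 := by ring
    rw [e1, e2]
    linarith
  -- the critical point
  set D : ℝ := ((lp + lm) / (2 * ρ) + 1 / ϑ) ^ 2 - 2 * lp / (ϑ * ρ) with hD
  have hDalt : D = (((lp + lm) * ϑ - 2 * ρ) ^ 2 + 8 * ρ * ϑ * lm) / (4 * ρ ^ 2 * ϑ ^ 2) := by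
    rw [hD]; field_simp; ring
  have hDpos : 0 < D := by
    rw [hDalt]
    apply div_pos _ (by positivity)
    nlinarith [sq_nonneg ((lp + lm) * ϑ - 2 * ρ), mul_pos (mul_pos hρ hϑ) hlm]
  set s : ℝ := Real.sqrt D with hs
  have hspos : 0 < s := Real.sqrt_pos.mpr hDpos
  have hs2 : s ^ 2 = D := Real.sq_sqrt hDpos.le
  set c : ℝ := 2 * ρ * s with hc
  have hcpos : 0 < c := by positivity
  have hc2 : ϑ ^ 2 * c ^ 2 = (lp + lm) ^ 2 * ϑ ^ 2 - 4 * ρ * ϑ * (lp - lm) + 4 * ρ ^ 2 := by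
    have : ϑ ^ 2 * c ^ 2 = 4 * ρ ^ 2 * ϑ ^ 2 * s ^ 2 := by rw [hc]; ring
    rw [this, hs2, hDalt]
    field_simp
    ring
  have hco : 2 * ρ * hstar = lp + lm - c := by
    rw [hdef, hc]
    field_simp
  -- hstar is inside the interval
  have hub : ϑ * hstar < 1 := by
    have key : (lp + lm) * ϑ - 2 * ρ < ϑ * c := by
      by_contra hcon
      push_neg at hcon
      have h0 : 0 < ϑ * c := by positivity
      nlinarith [mul_pos (mul_pos hρ hϑ) hlm]
    have h2 : 2 * ρ * (ϑ * hstar) = ϑ * (lp + lm) - ϑ * c := by linear_combination ϑ * hco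
    nlinarith [h2, key, hρ]
  have hlb : -1 < ϑ * hstar := by
    have key : ϑ * c < (lp + lm) * ϑ + 2 * ρ := by
      by_contra hcon
      push_neg at hcon
      have hpos2 : 0 < (lp + lm) * ϑ + 2 * ρ := by positivity
      have hsq := mul_self_le_mul_self hpos2.le hcon
      nlinarith [hsq, hc2, mul_pos (mul_pos hρ hϑ) hlp]
    have h2 : 2 * ρ * (ϑ * hstar) = ϑ * (lp + lm) - ϑ * c := by linear_combination ϑ * hco
    nlinarith [h2, key, hρ]
  have hs_mem : hstar ∈ Set.Ioo a b := by
    constructor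
    · rw [ha]
      rw [show -(1/ϑ) = (-1)/ϑ by ring, div_lt_iff₀ hϑ]
      linarith [hlb]
    · rw [hb, lt_div_iff₀ hϑ]
      linarith [hub]
  -- sign of g left and right of hstar, using the quadratic q
  have hq : ∀ x ∈ Set.Ioo a b, g x * ((1 + x * ϑ) * (1 - x * ϑ))
      = ρ * ϑ ^ 2 * x ^ 2 - (lp + lm) * ϑ ^ 2 * x + (lp - lm) * ϑ - ρ := by
    intro x hx
    have h1 := (hp1 x hx).ne'
    have h2 := (hp2 x hx).ne'
    simp only [hg]
    have e1 : ϑ / (1 + x * ϑ) * (1 + x * ϑ) = ϑ := div_mul_cancel₀ _ h1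
    have e2 : ϑ / (1 - x * ϑ) * (1 - x * ϑ) = ϑ := div_mul_cancel₀ _ h2
    linear_combination (lp * (1 - x * ϑ)) * e1 - (lm * (1 + x * ϑ)) * e2
  have hqfac : ∀ x : ℝ, 4 * ρ * (ρ * ϑ ^ 2 * x ^ 2 - (lp + lm) * ϑ ^ 2 * x + (lp - lm) * ϑ - ρ)
      = ϑ ^ 2 * ((2 * ρ * x - (lp + lm)) ^ 2 - c ^ 2) := by
    intro x
    linear_combination hc2
  have hgpos : ∀ x ∈ Set.Ioo a hstar, 0 < g x := by
    intro x hx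
    have hxab : x ∈ Set.Ioo a b := ⟨hx.1, hx.2.trans hs_mem.2⟩
    have h1 := hp1 x hxab
    have h2 := hp2 x hxab
    have hqpos : 0 < ρ * ϑ ^ 2 * x ^ 2 - (lp + lm) * ϑ ^ 2 * x + (lp - lm) * ϑ - ρ := by
      have hxl : 2 * ρ * x < 2 * ρ * hstar := by
        exact mul_lt_mul_of_pos_left hx.2 (by positivity)
      rw [hco] at hxl
      have hP : 0 < ((lp + lm) - 2 * ρ * x - c) * ((lp + lm) - 2 * ρ * x + c) :=
        mul_pos (by linarith) (by linarith)
      nlinarith [hqfac x, mul_pos (pow_pos hϑ 2) hP, hρ]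
    nlinarith [hq x hxab, mul_pos h1 h2]
  have hgneg : ∀ x ∈ Set.Ioo hstar b, g x < 0 := by
    intro x hx
    have hxab : x ∈ Set.Ioo a b := ⟨hs_mem.1.trans hx.1, hx.2⟩
    have h1 := hp1 x hxab
    have h2 := hp2 x hxab
    have hxϑ : x * ϑ < 1 := by linarith
    have hqneg : ρ * ϑ ^ 2 * x ^ 2 - (lp + lm) * ϑ ^ 2 * x + (lp - lm) * ϑ - ρ < 0 := by
      have hxl : 2 * ρ * hstar < 2 * ρ * x := mul_lt_mul_of_pos_left hx.1 (by positivity)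
      rw [hco] at hxl
      -- need: (2ρx − (lp+lm))² < c²
      have hr : ϑ * (2 * ρ * x - (lp + lm)) < ϑ * c := by
        -- 2ρxϑ < 2ρ (since xϑ<1), and  2ρ − (lp+lm)ϑ < ϑ c
        have key : 2 * ρ - (lp + lm) * ϑ < ϑ * c := by
          by_contra hcon
          push_neg at hcon
          have h0 : 0 < ϑ * c := by positivity
          nlinarith [mul_pos (mul_pos hρ hϑ) hlm]
        nlinarith [mul_pos hρ (sub_pos.mpr hxϑ)]
      have hl : -(ϑ * c) < ϑ * (2 * ρ * x - (lp + lm)) := by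
        nlinarith
      nlinarith [hqfac x, mul_pos hϑ hcpos]
    nlinarith [hq x hxab, mul_pos h1 h2]
  -- monotonicity
  have hmono : StrictMonoOn f (Set.Ioc a hstar) := by
    apply strictMonoOn_of_deriv_pos (convex_Ioc a hstar)
    · exact hcont.mono (fun x hx => ⟨hx.1, lt_of_le_of_lt hx.2 hs_mem.2⟩)
    · intro x hx
      rw [interior_Ioc] at hx
      rw [(hderiv x ⟨hx.1, hx.2.trans hs_mem.2⟩).deriv]
      exact hgpos x hx
  have hanti : StrictAntiOn f (Set.Ico hstar b) := by
    apply strictAntiOn_of_deriv_neg (convex_Ico hstar b)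
    · exact hcont.mono (fun x hx => ⟨lt_of_lt_of_le hs_mem.1 hx.1, hx.2⟩)
    · intro x hx
      rw [interior_Ico] at hx
      rw [(hderiv x ⟨hs_mem.1.trans hx.1, hx.2⟩).deriv]
      exact hgneg x hx
  refine ⟨hconc, ?_⟩
  intro h hh hne
  rcases lt_or_gt_of_ne hne with hlt | hgt
  · exact hmono ⟨hh.1, hlt.le⟩ ⟨hs_mem.1, le_refl _⟩ hlt
  · exact hanti ⟨le_refl _, hs_mem.2⟩ ⟨hgt.le, hh.2⟩ hgt
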